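/- For every $k \geq 1$, every group homomorphism from $SL_2(\mathbb{Z}/5)$ to the general linear group $GL_2(\mathbb{Z}/2^k)$ of invertible $2 \times 2$ matrices over $\mathbb{Z}/2^k$ is trivial. -/

import Mathlib

open Matrix

/-- In a ring, `(1 + 2b)^(2^j) = 1 + 2^(j+1) c` for some `c`. -/
lemma aux_one_add_two_mul_pow {S : Type*} [Ring S] :
    ∀ (j : ℕ) (b : S), ∃ c : S, (1 + 2 * b) ^ (2 ^ j) = 1 + 2 ^ (j + 1) * c := by
  intro j
  induction j with
  | zero => intro b; exact ⟨b, by norm_num⟩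
  | succ j ih =>
    intro b
    obtain ⟨c, hc⟩ := ih b
    refine ⟨c + 2 ^ j * c ^ 2, ?_⟩
    have hcomm : Commute (2 : S) c := by
      have := (Commute.one_left c).add_left (Commute.one_left c)
      simpa [one_add_one_eq_two] using this
    have h1 : (1 + 2 * b) ^ (2 ^ (j + 1)) = ((1 + 2 * b) ^ (2 ^ j)) ^ 2 := by
      rw [← pow_mul, pow_succ]
    rw [h1, hc]
    have hx : Commute ((2 : S) ^ (j + 1)) c := hcomm.pow_left _
    have h2 : (2 ^ (j + 1) * c) * (2 ^ (j + 1) * c) = 2 ^ (j + 2) * (2 ^ j * c ^ 2) := by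
      calc (2 ^ (j + 1) * c) * (2 ^ (j + 1) * c)
          = 2 ^ (j + 1) * (c * 2 ^ (j + 1)) * c := by
            rw [mul_assoc, mul_assoc, mul_assoc]
        _ = 2 ^ (j + 1) * (2 ^ (j + 1) * c) * c := by rw [← hx.eq]
        _ = (2 ^ (j + 1) * 2 ^ (j + 1)) * (c * c) := by
            rw [mul_assoc, mul_assoc, mul_assoc]
        _ = 2 ^ (j + 2) * (2 ^ j * c ^ 2) := by
            rw [← pow_add, show j + 1 + (j + 1) = (j + 2) + j by omega, pow_add,
              mul_assoc, sq]
    have h3 : (1 + 2 ^ (j + 1) * c) ^ 2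
        = 1 + 2 ^ (j + 1) * c + 2 ^ (j + 1) * c + (2 ^ (j + 1) * c) * (2 ^ (j + 1) * c) := by
      rw [sq]; noncomm_ring
    have h4 : (2 : S) ^ (j + 1) * c + 2 ^ (j + 1) * c = 2 ^ (j + 2) * c := by
      rw [← two_mul, ← mul_assoc, ← pow_succ']
    rw [h3, h2, mul_add, add_assoc (1 : S) (2 ^ (j + 1) * c) (2 ^ (j + 1) * c), h4,
      add_assoc]

/-- In `GL₂(ℤ/2^k)`, any element whose 5th power is 1 is 1. -/
lemma fifth_power_one (k : ℕ) (hk : 1 ≤ k)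
    (y : Matrix.GeneralLinearGroup (Fin 2) (ZMod (2 ^ k))) (hy : y ^ 5 = 1) : y = 1 := by
  haveI : NeZero (2 ^ k) := ⟨by positivity⟩
  -- reduction mod 2
  have hdvd : (2 : ℕ) ∣ 2 ^ k := dvd_pow_self 2 (by omega)
  set ρ : ZMod (2 ^ k) →+* ZMod 2 := ZMod.castHom hdvd (ZMod 2)
  set π : Matrix.GeneralLinearGroup (Fin 2) (ZMod (2 ^ k)) →*
      Matrix.GeneralLinearGroup (Fin 2) (ZMod 2) :=
    Units.map (ρ.mapMatrix).toMonoidHom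
  have hπy : π y = 1 := by
    have h5 : orderOf (π y) ∣ 5 := orderOf_dvd_of_pow_eq_one (by rw [← map_pow, hy, _root_.map_one])
    have h6 : orderOf (π y) ∣ 6 := by
      have := orderOf_dvd_natCard (π y)
      rwa [Matrix.card_GL_field, show ∏ i : Fin 2, (Fintype.card (ZMod 2) ^ 2
        - Fintype.card (ZMod 2) ^ (i : ℕ)) = 6 by decide] at this
    have : orderOf (π y) ∣ 1 := Nat.dvd_gcd h5 h6
    rw [Nat.dvd_one] at this
    exact orderOf_eq_one_iff.mp this
  -- entries of y are ≡ 1 mod 2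
  have hmat : ρ.mapMatrix (y : Matrix (Fin 2) (Fin 2) (ZMod (2 ^ k))) = 1 := by
    have := congrArg Units.val hπy
    simpa [π, Units.coe_map] using this
  have hdiv : ∀ i j : Fin 2, ∃ b : ZMod (2 ^ k),
      (y : Matrix (Fin 2) (Fin 2) (ZMod (2 ^ k))) i j
        = (1 : Matrix (Fin 2) (Fin 2) (ZMod (2 ^ k))) i j + 2 * b := by
    intro i j
    have he : ρ ((y : Matrix (Fin 2) (Fin 2) (ZMod (2 ^ k))) i j
        - (1 : Matrix (Fin 2) (Fin 2) (ZMod (2 ^ k))) i j) = 0 := by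
      have h1 : ρ ((y : Matrix (Fin 2) (Fin 2) (ZMod (2 ^ k))) i j)
          = (1 : Matrix (Fin 2) (Fin 2) (ZMod 2)) i j := by
        have := congrFun (congrFun hmat i) j
        simpa [RingHom.mapMatrix_apply, Matrix.map_apply] using this
      have h2 : ρ ((1 : Matrix (Fin 2) (Fin 2) (ZMod (2 ^ k))) i j)
          = (1 : Matrix (Fin 2) (Fin 2) (ZMod 2)) i j := by
        by_cases h : i = j <;> simp [Matrix.one_apply, h]
      rw [map_sub, h1, h2, sub_self]
    set a : ZMod (2 ^ k) := (y : Matrix (Fin 2) (Fin 2) (ZMod (2 ^ k))) i j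
      - (1 : Matrix (Fin 2) (Fin 2) (ZMod (2 ^ k))) i j with ha
    have hn : ((a.val : ℕ) : ZMod (2 ^ k)) = a := ZMod.natCast_rightInverse a
    rw [← hn, map_natCast, ZMod.natCast_eq_zero_iff] at he
    obtain ⟨m, hm⟩ := he
    refine ⟨(m : ZMod (2 ^ k)), ?_⟩
    have h2m : a = 2 * (m : ZMod (2 ^ k)) := by
      rw [← hn, hm]; push_cast; ring
    have := h2m
    rw [ha] at this
    linear_combination this
  -- build B with y = 1 + 2 B
  choose B hB using hdiv
  have hyB : (y : Matrix (Fin 2) (Fin 2) (ZMod (2 ^ k)))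
      = 1 + 2 * (Matrix.of B) := by
    ext i j
    rw [hB i j]
    simp [Matrix.add_apply, two_mul]
  -- 2^k = 0 in the matrix ring
  have h2k : (2 : Matrix (Fin 2) (Fin 2) (ZMod (2 ^ k))) ^ k = 0 := by
    have h1 : ((2 : ZMod (2 ^ k)) ^ k) = 0 := by
      have h := ZMod.natCast_self (2 ^ k)
      push_cast at h
      exact_mod_cast h
    calc (2 : Matrix (Fin 2) (Fin 2) (ZMod (2 ^ k))) ^ k
        = algebraMap (ZMod (2 ^ k)) (Matrix (Fin 2) (Fin 2) (ZMod (2 ^ k)))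
          ((2 : ZMod (2 ^ k)) ^ k) := by rw [map_pow, map_ofNat]
      _ = 0 := by rw [h1, map_zero]
  obtain ⟨c, hc⟩ := aux_one_add_two_mul_pow (k - 1) (Matrix.of B)
  have hpow : (y : Matrix (Fin 2) (Fin 2) (ZMod (2 ^ k))) ^ (2 ^ (k - 1)) = 1 := by
    rw [hyB, hc, show k - 1 + 1 = k by omega, h2k, zero_mul, add_zero]
  have hyp : y ^ (2 ^ (k - 1)) = 1 :=
    Units.ext (by rw [Units.val_pow_eq_pow_val, hpow, Units.val_one])
  have h5 : orderOf y ∣ 5 := orderOf_dvd_of_pow_eq_one hy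
  have hp : orderOf y ∣ 2 ^ (k - 1) := orderOf_dvd_of_pow_eq_one hyp
  have hcop : Nat.Coprime 5 (2 ^ (k - 1)) :=
    Nat.Coprime.pow_right _ (by decide)
  have h1 : orderOf y ∣ 1 := hcop ▸ Nat.dvd_gcd h5 hp
  rw [Nat.dvd_one] at h1
  exact orderOf_eq_one_iff.mp h1

/-- upper unipotent matrices in `SL₂(ℤ/5)` -/
def sl2U (t : ZMod 5) : Matrix.SpecialLinearGroup (Fin 2) (ZMod 5) :=
  ⟨!![1, t; 0, 1], by simp [Matrix.det_fin_two_of]⟩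

/-- lower unipotent matrices in `SL₂(ℤ/5)` -/
def sl2L (t : ZMod 5) : Matrix.SpecialLinearGroup (Fin 2) (ZMod 5) :=
  ⟨!![1, 0; t, 1], by simp [Matrix.det_fin_two_of]⟩

lemma sl2U_mul (s t : ZMod 5) : sl2U s * sl2U t = sl2U (s + t) := by
  apply Subtype.ext
  show (!![1, s; 0, 1] : Matrix (Fin 2) (Fin 2) (ZMod 5)) * !![1, t; 0, 1] = _
  rw [Matrix.mul_fin_two]
  norm_num [sl2U, add_comm]

lemma sl2L_mul (s t : ZMod 5) : sl2L s * sl2L t = sl2L (s + t) := by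
  apply Subtype.ext
  show (!![1, 0; s, 1] : Matrix (Fin 2) (Fin 2) (ZMod 5)) * !![1, 0; t, 1] = _
  rw [Matrix.mul_fin_two]
  norm_num [sl2L, add_comm]

lemma sl2U_zero : sl2U 0 = 1 := by
  apply Subtype.ext
  show (!![1, 0; 0, 1] : Matrix (Fin 2) (Fin 2) (ZMod 5)) = 1
  rw [Matrix.one_fin_two]

lemma sl2L_zero : sl2L 0 = 1 := by
  apply Subtype.ext
  show (!![1, 0; 0, 1] : Matrix (Fin 2) (Fin 2) (ZMod 5)) = 1
  rw [Matrix.one_fin_two]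

lemma sl2U_pow (n : ℕ) (t : ZMod 5) : sl2U t ^ n = sl2U (n * t) := by
  induction n with
  | zero => simp [sl2U_zero]
  | succ n ih => rw [pow_succ, ih, sl2U_mul]; push_cast; ring_nf

lemma sl2L_pow (n : ℕ) (t : ZMod 5) : sl2L t ^ n = sl2L (n * t) := by
  induction n with
  | zero => simp [sl2L_zero]
  | succ n ih => rw [pow_succ, ih, sl2L_mul]; push_cast; ring_nf

theorem SL2_ZMod5_hom_to_GL2_ZMod2pow_trivial
    (k : ℕ) (hk : 1 ≤ k)
    (f : Matrix.SpecialLinearGroup (Fin 2) (ZMod 5) →*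
      Matrix.GeneralLinearGroup (Fin 2) (ZMod (2 ^ k))) : f = 1 := by
  haveI : Fact (Nat.Prime 5) := ⟨by norm_num⟩
  have hU5 : sl2U 1 ^ 5 = 1 := by
    rw [sl2U_pow, mul_one, ZMod.natCast_self 5, sl2U_zero]
  have hL5 : sl2L 1 ^ 5 = 1 := by
    rw [sl2L_pow, mul_one, ZMod.natCast_self 5, sl2L_zero]
  have hfU1 : f (sl2U 1) = 1 :=
    fifth_power_one k hk _ (by rw [← map_pow, hU5, _root_.map_one])
  have hfL1 : f (sl2L 1) = 1 :=
    fifth_power_one k hk _ (by rw [← map_pow, hL5, _root_.map_one])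
  have hfU : ∀ t, f (sl2U t) = 1 := by
    intro t
    have : sl2U t = sl2U 1 ^ t.val := by
      rw [sl2U_pow, mul_one, ZMod.natCast_rightInverse t]
    rw [this, map_pow, hfU1, one_pow]
  have hfL : ∀ t, f (sl2L t) = 1 := by
    intro t
    have : sl2L t = sl2L 1 ^ t.val := by
      rw [sl2L_pow, mul_one, ZMod.natCast_rightInverse t]
    rw [this, map_pow, hfL1, one_pow]
  -- main claim for matrices with nonzero lower-left entry
  have claim1 : ∀ M : Matrix.SpecialLinearGroup (Fin 2) (ZMod 5),
      (M : Matrix (Fin 2) (Fin 2) (ZMod 5)) 1 0 ≠ 0 → f M = 1 := by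
    intro M hc
    set a := (M : Matrix (Fin 2) (Fin 2) (ZMod 5)) 0 0 with ha
    set b := (M : Matrix (Fin 2) (Fin 2) (ZMod 5)) 0 1 with hb
    set c := (M : Matrix (Fin 2) (Fin 2) (ZMod 5)) 1 0 with hcc
    set d := (M : Matrix (Fin 2) (Fin 2) (ZMod 5)) 1 1 with hd
    have hdet : a * d - b * c = 1 := by
      have h := M.2
      rw [Matrix.det_fin_two] at h
      exact h
    have hM : (M : Matrix (Fin 2) (Fin 2) (ZMod 5)) = !![a, b; c, d] := by
      rw [ha, hb, hcc, hd]
      exact Matrix.eta_fin_two _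
    clear_value a b c d
    have hdecomp : M = sl2U ((a - 1) * c⁻¹) * sl2L c * sl2U ((d - 1) * c⁻¹) := by
      apply Subtype.ext
      show (M : Matrix (Fin 2) (Fin 2) (ZMod 5)) =
        (!![1, (a - 1) * c⁻¹; 0, 1] * !![1, 0; c, 1]) * !![1, (d - 1) * c⁻¹; 0, 1]
      rw [Matrix.mul_fin_two, Matrix.mul_fin_two, hM]
      ext i j
      fin_cases i <;> fin_cases j <;>
        simp only [Matrix.cons_val', Matrix.cons_val_zero, Matrix.cons_val_one,
          Matrix.head_cons, Matrix.head_fin_const, Matrix.empty_val',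
          Matrix.cons_val_fin_one, Matrix.of_apply, Fin.zero_eta, Fin.mk_one]
      · field_simp
        ring
      · field_simp
        linear_combination -hdet
      · field_simp
        ring
      · field_simp
        ring
        try linear_combination hdet
        try linear_combination -2 * hdet
    rw [hdecomp, _root_.map_mul, _root_.map_mul, hfU, hfL, hfU, one_mul, one_mul]
  have claim2 : ∀ M : Matrix.SpecialLinearGroup (Fin 2) (ZMod 5), f M = 1 := by
    intro M
    by_cases hc : (M : Matrix (Fin 2) (Fin 2) (ZMod 5)) 1 0 ≠ 0
    · exact claim1 M hc
    · push_neg at hc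
      have hdet : (M : Matrix (Fin 2) (Fin 2) (ZMod 5)) 0 0 *
          (M : Matrix (Fin 2) (Fin 2) (ZMod 5)) 1 1 = 1 := by
        have h := M.2
        rw [Matrix.det_fin_two] at h
        rw [hc] at h
        linear_combination h
      haveI : Fact (1 < 5) := ⟨by norm_num⟩
      have ha : (M : Matrix (Fin 2) (Fin 2) (ZMod 5)) 0 0 ≠ 0 :=
        left_ne_zero_of_mul_eq_one hdet
      have hN : ((sl2L 1 * M : Matrix.SpecialLinearGroup (Fin 2) (ZMod 5)) :
          Matrix (Fin 2) (Fin 2) (ZMod 5)) 1 0 ≠ 0 := by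
        have : ((sl2L 1 * M : Matrix.SpecialLinearGroup (Fin 2) (ZMod 5)) :
            Matrix (Fin 2) (Fin 2) (ZMod 5)) 1 0 =
            (M : Matrix (Fin 2) (Fin 2) (ZMod 5)) 0 0 := by
          show ((!![1, 0; 1, 1] : Matrix (Fin 2) (Fin 2) (ZMod 5)) *
            (M : Matrix (Fin 2) (Fin 2) (ZMod 5))) 1 0 = _
          rw [Matrix.mul_apply, Fin.sum_univ_two]
          norm_num [hc]
        rw [this]
        exact ha
      have h1 := claim1 _ hN
      rw [_root_.map_mul, hfL, one_mul] at h1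
      exact h1
  exact MonoidHom.ext fun M => by rw [claim2 M]; rfl
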